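/- Let R, K_R : ℝ → ℝ be differentiable functions with R > 0, and define F(l) = R(l)·(R(l)²K_R(l)² − R'(l)² + 1). If the constraint equations 8πρ = K_R(K_R + 2K_L) − (2(RR')' − R'² − 1)/R² and 4πJ = K_R' + R'(K_R − K_L)/R hold, then F'(l) = 4π(kρ + pJ)R³ where k = 2R'/R and p = 2K_R. -/

import Mathlib

open Real

theorem auxiliary_F_derivative
    (R KR KL ρ J : ℝ → ℝ)
    (hRpos : ∀ l, R l > 0)
    (hR : Differentiable ℝ R)
    (hR' : Differentiable ℝ (deriv R))
    (hKR : Differentiable ℝ KR)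
    (hHam : ∀ l, 8 * π * ρ l =
      KR l * (KR l + 2 * KL l)
        - (2 * deriv (fun x => R x * deriv R x) l - (deriv R l) ^ 2 - 1) / (R l) ^ 2)
    (hMom : ∀ l, 4 * π * J l =
      deriv KR l + deriv R l * (KR l - KL l) / R l) :
    ∀ l, deriv (fun x => R x * ((R x) ^ 2 * (KR x) ^ 2 - (deriv R x) ^ 2 + 1)) l
      = 4 * π * ((2 * deriv R l / R l) * ρ l + (2 * KR l) * J l) * (R l) ^ 3 := by
  intro l
  have hRl := (hR l).hasDerivAt
  have hR'l := (hR' l).hasDerivAt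
  have hKl := (hKR l).hasDerivAt
  have hRne : R l ≠ 0 := (hRpos l).ne'
  have hpi : (π : ℝ) ≠ 0 := Real.pi_ne_zero
  have h2 : deriv (fun x => R x * deriv R x) l
      = deriv R l * deriv R l + R l * deriv (deriv R) l := (hRl.mul hR'l).deriv
  have hF : deriv (fun x => R x * ((R x) ^ 2 * (KR x) ^ 2 - (deriv R x) ^ 2 + 1)) l = _ := (hRl.mul ((((hRl.pow 2).mul (hKl.pow 2)).sub (hR'l.pow 2)).add_const 1)).deriv
  rw [hF]
  norm_num only [Pi.pow_apply, Pi.mul_apply, Pi.sub_apply]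
  have hH := hHam l
  rw [h2] at hH
  have hM := hMom l
  have hρ : ρ l = (KR l * (KR l + 2 * KL l)
      - (2 * (deriv R l * deriv R l + R l * deriv (deriv R) l) - (deriv R l) ^ 2 - 1)
        / (R l) ^ 2) / (8 * π) := by
    field_simp at hH ⊢
    linarith [hH]
  have hJ : J l = (deriv KR l + deriv R l * (KR l - KL l) / R l) / (4 * π) := by
    field_simp at hM ⊢
    linarith [hM]
  rw [hρ, hJ]
  field_simp
  ring
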